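/- Let N ≥ 3 and 2 ≤ k ≤ N. If the density matrix ρ on H = H_1 ⊗ … ⊗ H_N is k-separable, then F(ρ,φ) ≤ 0, where F(ρ,φ) := Σ_{1≤i,j,j'≤N pairwise distinct} ( |⟨φ_{i,j}|ρ|φ_{i,j'}⟩| − sqrt(⟨φ_{i,j}| ⊗ ⟨φ_{i,j'}| Π_j (ρ⊗ρ) Π_j |φ_{i,j}⟩ ⊗ |φ_{i,j'}⟩) ) − N_k · Σ_{1≤i≠j≤N} ⟨φ_{i,j}|ρ|φ_{i,j}⟩ and N_k := max{2(N−k−1), N−k}. -/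

import Mathlib

open scoped BigOperators ComplexOrder

noncomputable section

namespace Sep

variable {N : ℕ} {d : Fin N → ℕ}

/-- The configuration (computational-basis index) of the product basis state with
local state `|1⟩` in the factors indexed by `S` and `|0⟩` in all other factors. -/
def basisCfg (hd : ∀ i, 2 ≤ d i) (S : Finset (Fin N)) : (i : Fin N) → Fin (d i) :=
  fun i => if i ∈ S then ⟨1, by have := hd i; omega⟩ else ⟨0, by have := hd i; omega⟩

/-- The outer product `|ψ⟩⟨ψ|` as a matrix in the computational basis. -/
def outer (ψ : ((i : Fin N) → Fin (d i)) → ℂ) :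
    Matrix ((i : Fin N) → Fin (d i)) ((i : Fin N) → Fin (d i)) ℂ :=
  Matrix.vecMulVec ψ (star ψ)

/-- `⟨a| ⊗ ⟨b| Π_j (ρ ⊗ ρ) Π_j |a⟩ ⊗ |b⟩`, where `Π_j` is the unitary on `H ⊗ H`
swapping the two copies of the `j`-th factor.  Since `Π_j |a⟩ ⊗ |b⟩` is the
basis vector indexed by the pair of configurations obtained from `(a, b)` by
exchanging the `j`-th coordinates, this equals the corresponding diagonal
entry of `ρ ⊗ ρ`. -/
def swapQuad (ρ : Matrix ((i : Fin N) → Fin (d i)) ((i : Fin N) → Fin (d i)) ℂ)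
    (j : Fin N) (a b : (i : Fin N) → Fin (d i)) : ℂ :=
  ρ (Function.update a j (b j)) (Function.update a j (b j)) *
    ρ (Function.update b j (a j)) (Function.update b j (a j))

/-- A pure state (state vector) is `k`-separable if `{1,…,N}` can be partitioned into
`k` (pairwise disjoint, nonempty) parts — given by the fibers of a surjection
`P : Fin N → Fin k` — such that `ψ` factorizes as a product of `k` functions, the
`l`-th of which depends only on the coordinates in part `l`. -/
def kSepPure (k : ℕ) (ψ : ((i : Fin N) → Fin (d i)) → ℂ) : Prop :=
  ∃ P : Fin N → Fin k, Function.Surjective P ∧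
    ∃ f : Fin k → (((i : Fin N) → Fin (d i)) → ℂ),
      (∀ l x y, (∀ i, P i = l → x i = y i) → f l x = f l y) ∧
      ∀ x, ψ x = ∏ l, f l x

/-- A density matrix: positive semidefinite with trace 1. -/
def IsDensityMatrix
    (ρ : Matrix ((i : Fin N) → Fin (d i)) ((i : Fin N) → Fin (d i)) ℂ) : Prop :=
  ρ.PosSemidef ∧ ρ.trace = 1

/-- A mixed state is `k`-separable if it is a convex combination of projectors onto
`k`-separable pure (unit) states, possibly separable w.r.t. different partitions. -/
def kSep (k : ℕ)
    (ρ : Matrix ((i : Fin N) → Fin (d i)) ((i : Fin N) → Fin (d i)) ℂ) : Prop :=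
  ∃ (n : ℕ) (p : Fin n → ℝ) (ψ : Fin n → ((i : Fin N) → Fin (d i)) → ℂ),
    (∀ s, 0 ≤ p s) ∧ (∑ s, p s = 1) ∧
    (∀ s, ∑ x, Complex.normSq (ψ s x) = 1) ∧
    (∀ s, kSepPure k (ψ s)) ∧
    ρ = ∑ s, (p s : ℂ) • outer (ψ s)

end Sep


open scoped BigOperators ComplexOrder

noncomputable section

namespace SepAux

/-- Cauchy–Schwarz in the form needed. -/
lemma cs_sqrt {n : ℕ} (p x y : Fin n → ℝ) (hp : ∀ s, 0 ≤ p s)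
    (hx : ∀ s, 0 ≤ x s) (hy : ∀ s, 0 ≤ y s) :
    ∑ s, p s * (x s * y s) ≤
      Real.sqrt (∑ s, p s * x s ^ 2) * Real.sqrt (∑ s, p s * y s ^ 2) := by
  set u : Fin n → ℝ := fun s => Real.sqrt (p s) * x s with hu
  set v : Fin n → ℝ := fun s => Real.sqrt (p s) * y s with hv
  have huv : ∀ s, p s * (x s * y s) = u s * v s := by
    intro s
    simp only [hu, hv]
    rw [mul_mul_mul_comm, Real.mul_self_sqrt (hp s)]
  have husq : ∀ s, u s ^ 2 = p s * x s ^ 2 := by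
    intro s; simp only [hu]; rw [mul_pow, Real.sq_sqrt (hp s)]
  have hvsq : ∀ s, v s ^ 2 = p s * y s ^ 2 := by
    intro s; simp only [hv]; rw [mul_pow, Real.sq_sqrt (hp s)]
  have hnn : 0 ≤ ∑ s, u s * v s := by
    refine Finset.sum_nonneg fun s _ => ?_
    have := hx s; have := hy s
    have := Real.sqrt_nonneg (p s)
    simp only [hu, hv]
    positivity
  calc ∑ s, p s * (x s * y s) = ∑ s, u s * v s := by
        exact Finset.sum_congr rfl fun s _ => huv s
    _ = Real.sqrt ((∑ s, u s * v s) ^ 2) := (Real.sqrt_sq hnn).symm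
    _ ≤ Real.sqrt ((∑ s, u s ^ 2) * (∑ s, v s ^ 2)) :=
        Real.sqrt_le_sqrt (Finset.sum_mul_sq_le_sq_mul_sq _ _ _)
    _ = Real.sqrt (∑ s, u s ^ 2) * Real.sqrt (∑ s, v s ^ 2) :=
        Real.sqrt_mul (Finset.sum_nonneg fun s _ => sq_nonneg _) _
    _ = _ := by
        rw [Finset.sum_congr rfl fun s _ => husq s, Finset.sum_congr rfl fun s _ => hvsq s]

/-- Counting lemma: the number of `j' ∉ {i,j}` in the fiber of `j` is at most `N - k`. -/
lemma count_le {N k : ℕ} (hk : 1 ≤ k) (P : Fin N → Fin k) (hs : Function.Surjective P)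
    (i j : Fin N) :
    (Finset.univ.filter
        (fun j' : Fin N => (i ≠ j ∧ i ≠ j' ∧ j ≠ j') ∧ P j = P j')).card ≤ N - k := by
  classical
  set F := Finset.univ.filter (fun j' : Fin N => P j' = P j) with hF
  have hsub : Finset.univ.filter
      (fun j' : Fin N => (i ≠ j ∧ i ≠ j' ∧ j ≠ j') ∧ P j = P j') ⊆ F.erase j := by
    intro x hx
    simp only [Finset.mem_filter, Finset.mem_univ, true_and] at hx
    refine Finset.mem_erase.2 ⟨Ne.symm hx.1.2.2, ?_⟩
    simp only [hF, Finset.mem_filter, Finset.mem_univ, true_and]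
    exact hx.2.symm
  have hjF : j ∈ F := by simp [hF]
  have hcardN : N = ∑ l : Fin k, (Finset.univ.filter (fun a : Fin N => P a = l)).card := by
    have := Finset.card_eq_sum_card_fiberwise
      (f := P) (s := (Finset.univ : Finset (Fin N))) (t := Finset.univ)
      (fun x _ => Finset.mem_univ _)
    simpa using this
  have hfib : ∀ l : Fin k, 1 ≤ (Finset.univ.filter (fun a : Fin N => P a = l)).card := by
    intro l
    obtain ⟨x, hx⟩ := hs l
    exact Finset.card_pos.2 ⟨x, by simp [hx]⟩
  have hsplit : ∑ l : Fin k, (Finset.univ.filter (fun a : Fin N => P a = l)).card =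
      F.card + ∑ l ∈ Finset.univ.erase (P j),
        (Finset.univ.filter (fun a : Fin N => P a = l)).card := by
    rw [← Finset.add_sum_erase _
      (fun l => (Finset.univ.filter (fun a : Fin N => P a = l)).card)
      (Finset.mem_univ (P j))]
  have herase : (k - 1 : ℕ) ≤ ∑ l ∈ Finset.univ.erase (P j),
      (Finset.univ.filter (fun a : Fin N => P a = l)).card := by
    calc (k - 1 : ℕ) = (Finset.univ.erase (P j)).card • 1 := by
          rw [Finset.card_erase_of_mem (Finset.mem_univ _), Finset.card_univ,
            Fintype.card_fin, smul_eq_mul, mul_one]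
    _ ≤ _ := Finset.card_nsmul_le_sum _ _ _ (fun l _ => hfib l)
  have hFcard : F.card + k ≤ N + 1 := by omega
  have h1 : j ∈ F := hjF
  have hFpos : 1 ≤ F.card := Finset.card_pos.2 ⟨j, hjF⟩
  have := Finset.card_le_card hsub
  rw [Finset.card_erase_of_mem hjF] at this
  omega

end SepAux

namespace SepAux

open Sep

variable {N : ℕ} {d : Fin N → ℕ}

lemma prod_swap_eq {k : ℕ} (P : Fin N → Fin k)
    (f : Fin k → (((i : Fin N) → Fin (d i)) → ℂ))
    (hdep : ∀ l x y, (∀ i, P i = l → x i = y i) → f l x = f l y)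
    (j j' : Fin N) (hP : P j ≠ P j')
    (a b : (i : Fin N) → Fin (d i)) (hab : ∀ i, i ≠ j → i ≠ j' → a i = b i) :
    (∏ l, f l (Function.update a j (b j))) * (∏ l, f l (Function.update b j (a j)))
      = (∏ l, f l a) * (∏ l, f l b) := by
  rw [← Finset.prod_mul_distrib, ← Finset.prod_mul_distrib]
  refine Finset.prod_congr rfl fun l _ => ?_
  by_cases hl : l = P j
  · subst hl
    have h1 : f (P j) (Function.update a j (b j)) = f (P j) b := by
      refine hdep _ _ _ fun i hi => ?_
      rcases eq_or_ne i j with rfl | hij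
      · simp
      · rw [Function.update_of_ne hij]
        exact hab i hij (fun h => hP (hi.symm.trans (congrArg P h)))
    have h2 : f (P j) (Function.update b j (a j)) = f (P j) a := by
      refine hdep _ _ _ fun i hi => ?_
      rcases eq_or_ne i j with rfl | hij
      · simp
      · rw [Function.update_of_ne hij]
        exact (hab i hij (fun h => hP (hi.symm.trans (congrArg P h)))).symm
    rw [h1, h2]; ring
  · have h1 : f l (Function.update a j (b j)) = f l a := by
      refine hdep _ _ _ fun i hi => ?_
      exact Function.update_of_ne (fun h => hl (hi.symm.trans (congrArg P h))) _ _
    have h2 : f l (Function.update b j (a j)) = f l b := by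
      refine hdep _ _ _ fun i hi => ?_
      exact Function.update_of_ne (fun h => hl (hi.symm.trans (congrArg P h))) _ _
    rw [h1, h2]

end SepAux

namespace SepAux

lemma pure_bound {N : ℕ} {d : Fin N → ℕ} (hd : ∀ i, 2 ≤ d i) {k : ℕ} (hk : 1 ≤ k)
    (ψ : ((i : Fin N) → Fin (d i)) → ℂ) (hψ : Sep.kSepPure k ψ) :
    (∑ i : Fin N, ∑ j : Fin N, ∑ j' : Fin N,
        if i ≠ j ∧ i ≠ j' ∧ j ≠ j' then
          ‖ψ (Sep.basisCfg hd {i, j})‖ *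
              ‖ψ (Sep.basisCfg hd {i, j'})‖ -
            ‖ψ (Function.update (Sep.basisCfg hd {i, j}) j
                (Sep.basisCfg hd {i, j'} j))‖ *
              ‖ψ (Function.update (Sep.basisCfg hd {i, j'}) j
                (Sep.basisCfg hd {i, j} j))‖
        else 0)
      ≤ ((N - k : ℕ) : ℝ) *
          ∑ i : Fin N, ∑ j : Fin N,
            if i ≠ j then Complex.normSq (ψ (Sep.basisCfg hd {i, j})) else 0 := by
  classical
  obtain ⟨P, hPs, f, hdep, hprod⟩ := hψ
  have hDnn : ∀ i j : Fin N, (0:ℝ) ≤ Complex.normSq (ψ (Sep.basisCfg hd {i, j})) :=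
    fun i j => Complex.normSq_nonneg _
  have step1 : ∀ i j j' : Fin N,
      (if i ≠ j ∧ i ≠ j' ∧ j ≠ j' then
          ‖ψ (Sep.basisCfg hd {i, j})‖ *
              ‖ψ (Sep.basisCfg hd {i, j'})‖ -
            ‖ψ (Function.update (Sep.basisCfg hd {i, j}) j
                (Sep.basisCfg hd {i, j'} j))‖ *
              ‖ψ (Function.update (Sep.basisCfg hd {i, j'}) j
                (Sep.basisCfg hd {i, j} j))‖
        else 0) ≤
      (if (i ≠ j ∧ i ≠ j' ∧ j ≠ j') ∧ P j = P j' then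
          (1/2) * Complex.normSq (ψ (Sep.basisCfg hd {i, j})) else 0)
        + (if (i ≠ j ∧ i ≠ j' ∧ j ≠ j') ∧ P j = P j' then
          (1/2) * Complex.normSq (ψ (Sep.basisCfg hd {i, j'})) else 0) := by
    intro i j j'
    by_cases hc : i ≠ j ∧ i ≠ j' ∧ j ≠ j'
    · by_cases hp : P j = P j'
      · rw [if_pos hc, if_pos ⟨hc, hp⟩, if_pos ⟨hc, hp⟩]
        have h1 : ‖ψ (Sep.basisCfg hd {i, j})‖ ^ 2 =
            Complex.normSq (ψ (Sep.basisCfg hd {i, j})) := Complex.sq_norm _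
        have h2 : ‖ψ (Sep.basisCfg hd {i, j'})‖ ^ 2 =
            Complex.normSq (ψ (Sep.basisCfg hd {i, j'})) := Complex.sq_norm _
        have h3 : (0:ℝ) ≤
            ‖ψ (Function.update (Sep.basisCfg hd {i, j}) j
                (Sep.basisCfg hd {i, j'} j))‖ *
              ‖ψ (Function.update (Sep.basisCfg hd {i, j'}) j
                (Sep.basisCfg hd {i, j} j))‖ :=
          mul_nonneg (norm_nonneg _) (norm_nonneg _)
        nlinarith [sq_nonneg (‖ψ (Sep.basisCfg hd {i, j})‖ -
          ‖ψ (Sep.basisCfg hd {i, j'})‖)]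
      · rw [if_pos hc, if_neg (fun h => hp h.2), if_neg (fun h => hp h.2)]
        have hab : ∀ i' : Fin N, i' ≠ j → i' ≠ j' →
            Sep.basisCfg hd {i, j} i' = Sep.basisCfg hd {i, j'} i' := by
          intro i' h1 h2
          simp [Sep.basisCfg, h1, h2]
        have hps := prod_swap_eq P f hdep j j' hp _ _ hab
        have h4 : ψ (Function.update (Sep.basisCfg hd {i, j}) j
              (Sep.basisCfg hd {i, j'} j)) *
            ψ (Function.update (Sep.basisCfg hd {i, j'}) j
              (Sep.basisCfg hd {i, j} j)) =
            ψ (Sep.basisCfg hd {i, j}) * ψ (Sep.basisCfg hd {i, j'}) := by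
          rw [hprod, hprod, hprod, hprod]; exact hps
        have h5 : ‖ψ (Function.update (Sep.basisCfg hd {i, j}) j
              (Sep.basisCfg hd {i, j'} j))‖ *
            ‖ψ (Function.update (Sep.basisCfg hd {i, j'}) j
              (Sep.basisCfg hd {i, j} j))‖ =
            ‖ψ (Sep.basisCfg hd {i, j})‖ *
              ‖ψ (Sep.basisCfg hd {i, j'})‖ := by
          rw [← norm_mul, h4, norm_mul]
        rw [h5]
        simp
    · rw [if_neg hc, if_neg (fun h => hc h.1), if_neg (fun h => hc h.1)]
      simp
  have hinner : ∀ i j : Fin N,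
      (∑ j' : Fin N, if (i ≠ j ∧ i ≠ j' ∧ j ≠ j') ∧ P j = P j' then
          (1/2) * Complex.normSq (ψ (Sep.basisCfg hd {i, j})) else 0)
        ≤ (if i ≠ j then
            ((N - k : ℕ) : ℝ) * ((1/2) * Complex.normSq (ψ (Sep.basisCfg hd {i, j})))
          else 0) := by
    intro i j
    by_cases hij : i ≠ j
    · rw [if_pos hij, ← Finset.sum_filter, Finset.sum_const, nsmul_eq_mul]
      have hcard := count_le hk P hPs i j
      have hx : (0:ℝ) ≤ (1/2) * Complex.normSq (ψ (Sep.basisCfg hd {i, j})) := by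
        have := hDnn i j; positivity
      exact mul_le_mul_of_nonneg_right (by exact_mod_cast hcard) hx
    · rw [if_neg hij]
      push_neg at hij
      refine le_of_eq (Finset.sum_eq_zero fun j' _ => ?_)
      rw [if_neg (fun h => h.1.1 hij)]
  have hswap :
      (∑ i : Fin N, ∑ j : Fin N, ∑ j' : Fin N,
          if (i ≠ j ∧ i ≠ j' ∧ j ≠ j') ∧ P j = P j' then
            (1/2) * Complex.normSq (ψ (Sep.basisCfg hd {i, j'})) else 0)
        = (∑ i : Fin N, ∑ j : Fin N, ∑ j' : Fin N,
          if (i ≠ j ∧ i ≠ j' ∧ j ≠ j') ∧ P j = P j' then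
            (1/2) * Complex.normSq (ψ (Sep.basisCfg hd {i, j})) else 0) := by
    refine Finset.sum_congr rfl fun i _ => ?_
    rw [Finset.sum_comm]
    refine Finset.sum_congr rfl fun a _ => Finset.sum_congr rfl fun b _ => ?_
    refine if_congr ⟨fun ⟨⟨u, v, w⟩, x⟩ => ⟨⟨v, u, w.symm⟩, x.symm⟩,
      fun ⟨⟨u, v, w⟩, x⟩ => ⟨⟨v, u, w.symm⟩, x.symm⟩⟩ rfl rfl
  calc (∑ i : Fin N, ∑ j : Fin N, ∑ j' : Fin N,
        if i ≠ j ∧ i ≠ j' ∧ j ≠ j' then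
          ‖ψ (Sep.basisCfg hd {i, j})‖ *
              ‖ψ (Sep.basisCfg hd {i, j'})‖ -
            ‖ψ (Function.update (Sep.basisCfg hd {i, j}) j
                (Sep.basisCfg hd {i, j'} j))‖ *
              ‖ψ (Function.update (Sep.basisCfg hd {i, j'}) j
                (Sep.basisCfg hd {i, j} j))‖
        else 0)
      ≤ ∑ i : Fin N, ∑ j : Fin N, ∑ j' : Fin N,
          ((if (i ≠ j ∧ i ≠ j' ∧ j ≠ j') ∧ P j = P j' then
              (1/2) * Complex.normSq (ψ (Sep.basisCfg hd {i, j})) else 0)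
            + (if (i ≠ j ∧ i ≠ j' ∧ j ≠ j') ∧ P j = P j' then
              (1/2) * Complex.normSq (ψ (Sep.basisCfg hd {i, j'})) else 0)) :=
        Finset.sum_le_sum fun i _ => Finset.sum_le_sum fun j _ =>
          Finset.sum_le_sum fun j' _ => step1 i j j'
    _ = (∑ i : Fin N, ∑ j : Fin N, ∑ j' : Fin N,
          if (i ≠ j ∧ i ≠ j' ∧ j ≠ j') ∧ P j = P j' then
            (1/2) * Complex.normSq (ψ (Sep.basisCfg hd {i, j})) else 0)
        + (∑ i : Fin N, ∑ j : Fin N, ∑ j' : Fin N,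
          if (i ≠ j ∧ i ≠ j' ∧ j ≠ j') ∧ P j = P j' then
            (1/2) * Complex.normSq (ψ (Sep.basisCfg hd {i, j'})) else 0) := by
        simp only [Finset.sum_add_distrib]
    _ = (∑ i : Fin N, ∑ j : Fin N, ∑ j' : Fin N,
          if (i ≠ j ∧ i ≠ j' ∧ j ≠ j') ∧ P j = P j' then
            (1/2) * Complex.normSq (ψ (Sep.basisCfg hd {i, j})) else 0)
        + (∑ i : Fin N, ∑ j : Fin N, ∑ j' : Fin N,
          if (i ≠ j ∧ i ≠ j' ∧ j ≠ j') ∧ P j = P j' then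
            (1/2) * Complex.normSq (ψ (Sep.basisCfg hd {i, j})) else 0) := by
        rw [hswap]
    _ ≤ (∑ i : Fin N, ∑ j : Fin N,
          if i ≠ j then
            ((N - k : ℕ) : ℝ) * ((1/2) * Complex.normSq (ψ (Sep.basisCfg hd {i, j})))
          else 0)
        + (∑ i : Fin N, ∑ j : Fin N,
          if i ≠ j then
            ((N - k : ℕ) : ℝ) * ((1/2) * Complex.normSq (ψ (Sep.basisCfg hd {i, j})))
          else 0) := by
        refine add_le_add ?_ ?_ <;>
          exact Finset.sum_le_sum fun i _ => Finset.sum_le_sum fun j _ => hinner i j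
    _ = ((N - k : ℕ) : ℝ) *
          ∑ i : Fin N, ∑ j : Fin N,
            if i ≠ j then Complex.normSq (ψ (Sep.basisCfg hd {i, j})) else 0 := by
        rw [← Finset.sum_add_distrib, Finset.mul_sum]
        refine Finset.sum_congr rfl fun i _ => ?_
        rw [← Finset.sum_add_distrib, Finset.mul_sum]
        refine Finset.sum_congr rfl fun j _ => ?_
        by_cases hij : i ≠ j <;> simp [hij] <;> ring

end SepAux


open Sep in
/-- Theorem 1 of the paper: if `ρ` is `k`-separable then `𝓕(ρ,φ) ≤ 0`, where
`𝓕(ρ,φ) = Σ_{i,j,j' pairwise distinct} (|⟨φ_{i,j}|ρ|φ_{i,j'}⟩| −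
sqrt(⟨φ_{i,j}|⊗⟨φ_{i,j'}| Π_j ρ⊗ρ Π_j |φ_{i,j}⟩⊗|φ_{i,j'}⟩)) −
N_k Σ_{i≠j} ⟨φ_{i,j}|ρ|φ_{i,j}⟩` and `N_k = max{2(N−k−1), N−k}`. -/
theorem dicke_kSep_criterion_two_excitations
    {N : ℕ} {d : Fin N → ℕ} (hN : 3 ≤ N) (hd : ∀ i, 2 ≤ d i)
    (k : ℕ) (hk2 : 2 ≤ k) (hkN : k ≤ N)
    (ρ : Matrix ((i : Fin N) → Fin (d i)) ((i : Fin N) → Fin (d i)) ℂ)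
    (hρ : IsDensityMatrix ρ) (hsep : kSep k ρ) :
    (∑ i : Fin N, ∑ j : Fin N, ∑ j' : Fin N,
        if i ≠ j ∧ i ≠ j' ∧ j ≠ j' then
          ‖ρ (basisCfg hd {i, j}) (basisCfg hd {i, j'})‖ -
            Real.sqrt ((swapQuad ρ j (basisCfg hd {i, j}) (basisCfg hd {i, j'})).re)
        else 0) -
      ((max (2 * (N - k - 1)) (N - k) : ℕ) : ℝ) *
        ∑ i : Fin N, ∑ j : Fin N,
          (if i ≠ j then (ρ (basisCfg hd {i, j}) (basisCfg hd {i, j})).re else 0)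
      ≤ 0 := by
  classical
  obtain ⟨n, p, ψ, hp, hpsum, hnorm, hsepp, hρeq⟩ := hsep
  have hk1 : 1 ≤ k := le_trans (by norm_num) hk2
  have hentry : ∀ x y, ρ x y = ∑ s, (p s : ℂ) * (ψ s x * (starRingEnd ℂ) (ψ s y)) := by
    intro x y
    rw [hρeq]
    simp [Matrix.sum_apply, Matrix.smul_apply, Sep.outer, Matrix.vecMulVec_apply,
      Pi.star_apply, RCLike.star_def, smul_eq_mul]
  have hdiag : ∀ x, ρ x x = ((∑ s, p s * Complex.normSq (ψ s x) : ℝ) : ℂ) := by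
    intro x
    rw [hentry, Complex.ofReal_sum]
    refine Finset.sum_congr rfl fun s _ => ?_
    rw [Complex.mul_conj]
    push_cast
    ring
  -- the pure-state triple term
  set q : Fin n → Fin N → Fin N → Fin N → ℝ := fun s i j j' =>
    if i ≠ j ∧ i ≠ j' ∧ j ≠ j' then
      ‖ψ s (basisCfg hd {i, j})‖ * ‖ψ s (basisCfg hd {i, j'})‖ -
        ‖ψ s (Function.update (basisCfg hd {i, j}) j (basisCfg hd {i, j'} j))‖ *
          ‖ψ s (Function.update (basisCfg hd {i, j'}) j (basisCfg hd {i, j} j))‖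
    else 0 with hq
  have htri : ∀ i j j' : Fin N,
      (if i ≠ j ∧ i ≠ j' ∧ j ≠ j' then
          ‖ρ (basisCfg hd {i, j}) (basisCfg hd {i, j'})‖ -
            Real.sqrt ((swapQuad ρ j (basisCfg hd {i, j}) (basisCfg hd {i, j'})).re)
        else 0)
      ≤ ∑ s, p s * q s i j j' := by
    intro i j j'
    by_cases hc : i ≠ j ∧ i ≠ j' ∧ j ≠ j'
    · rw [if_pos hc]
      have h1 : ‖ρ (basisCfg hd {i, j}) (basisCfg hd {i, j'})‖ ≤
          ∑ s, p s * (‖ψ s (basisCfg hd {i, j})‖ *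
            ‖ψ s (basisCfg hd {i, j'})‖) := by
        rw [hentry]
        refine le_trans (norm_sum_le _ _)
          (le_of_eq (Finset.sum_congr rfl fun s _ => ?_))
        rw [norm_mul, norm_mul, Complex.norm_conj, Complex.norm_real, Real.norm_of_nonneg (hp s)]
      have h2 : ∑ s, p s *
            (‖ψ s (Function.update (basisCfg hd {i, j}) j
                (basisCfg hd {i, j'} j))‖ *
              ‖ψ s (Function.update (basisCfg hd {i, j'}) j
                (basisCfg hd {i, j} j))‖) ≤
          Real.sqrt ((swapQuad ρ j (basisCfg hd {i, j}) (basisCfg hd {i, j'})).re) := by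
        have hsw : (swapQuad ρ j (basisCfg hd {i, j}) (basisCfg hd {i, j'})).re =
            (∑ s, p s * Complex.normSq (ψ s (Function.update (basisCfg hd {i, j}) j
                (basisCfg hd {i, j'} j)))) *
            (∑ s, p s * Complex.normSq (ψ s (Function.update (basisCfg hd {i, j'}) j
                (basisCfg hd {i, j} j)))) := by
          simp only [Sep.swapQuad]
          rw [hdiag, hdiag, ← Complex.ofReal_mul, Complex.ofReal_re]
        have hnn1 : (0:ℝ) ≤ ∑ s, p s * Complex.normSq (ψ s
            (Function.update (basisCfg hd {i, j}) j (basisCfg hd {i, j'} j))) :=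
          Finset.sum_nonneg fun s _ => mul_nonneg (hp s) (Complex.normSq_nonneg _)
        rw [hsw, Real.sqrt_mul hnn1]
        have hcs := SepAux.cs_sqrt p
          (fun s => ‖ψ s (Function.update (basisCfg hd {i, j}) j
            (basisCfg hd {i, j'} j))‖)
          (fun s => ‖ψ s (Function.update (basisCfg hd {i, j'}) j
            (basisCfg hd {i, j} j))‖) hp
          (fun s => norm_nonneg _) (fun s => norm_nonneg _)
        simpa [Complex.sq_norm] using hcs
      calc ‖ρ (basisCfg hd {i, j}) (basisCfg hd {i, j'})‖ -
            Real.sqrt ((swapQuad ρ j (basisCfg hd {i, j}) (basisCfg hd {i, j'})).re)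
          ≤ (∑ s, p s * (‖ψ s (basisCfg hd {i, j})‖ *
              ‖ψ s (basisCfg hd {i, j'})‖)) -
            ∑ s, p s *
              (‖ψ s (Function.update (basisCfg hd {i, j}) j
                  (basisCfg hd {i, j'} j))‖ *
                ‖ψ s (Function.update (basisCfg hd {i, j'}) j
                  (basisCfg hd {i, j} j))‖) := sub_le_sub h1 h2
        _ = ∑ s, p s * q s i j j' := by
            rw [← Finset.sum_sub_distrib]
            refine Finset.sum_congr rfl fun s _ => ?_
            rw [hq]
            simp only [if_pos hc]
            ring
    · rw [if_neg hc]
      refine le_of_eq (Finset.sum_eq_zero fun s _ => ?_).symm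
      rw [hq]
      simp [hc]
  -- interchange sums
  have hinterch : ∀ (g : Fin N → Fin N → Fin N → Fin n → ℝ),
      (∑ i : Fin N, ∑ j : Fin N, ∑ j' : Fin N, ∑ s : Fin n, g i j j' s)
        = ∑ s : Fin n, ∑ i : Fin N, ∑ j : Fin N, ∑ j' : Fin N, g i j j' s := by
    intro g
    calc (∑ i : Fin N, ∑ j : Fin N, ∑ j' : Fin N, ∑ s : Fin n, g i j j' s)
        = ∑ i : Fin N, ∑ j : Fin N, ∑ s : Fin n, ∑ j' : Fin N, g i j j' s :=
          Finset.sum_congr rfl fun i _ => Finset.sum_congr rfl fun j _ => Finset.sum_comm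
      _ = ∑ i : Fin N, ∑ s : Fin n, ∑ j : Fin N, ∑ j' : Fin N, g i j j' s :=
          Finset.sum_congr rfl fun i _ => Finset.sum_comm
      _ = ∑ s : Fin n, ∑ i : Fin N, ∑ j : Fin N, ∑ j' : Fin N, g i j j' s :=
          Finset.sum_comm
  have hfact : ∀ s : Fin n,
      (∑ i : Fin N, ∑ j : Fin N, ∑ j' : Fin N, p s * q s i j j')
        = p s * ∑ i : Fin N, ∑ j : Fin N, ∑ j' : Fin N, q s i j j' := by
    intro s
    rw [Finset.mul_sum]
    refine Finset.sum_congr rfl fun i _ => ?_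
    rw [Finset.mul_sum]
    refine Finset.sum_congr rfl fun j _ => ?_
    rw [Finset.mul_sum]
  have hmain1 : (∑ i : Fin N, ∑ j : Fin N, ∑ j' : Fin N,
      if i ≠ j ∧ i ≠ j' ∧ j ≠ j' then
        ‖ρ (basisCfg hd {i, j}) (basisCfg hd {i, j'})‖ -
          Real.sqrt ((swapQuad ρ j (basisCfg hd {i, j}) (basisCfg hd {i, j'})).re)
      else 0)
      ≤ ∑ s : Fin n, p s * ∑ i : Fin N, ∑ j : Fin N, ∑ j' : Fin N, q s i j j' := by
    calc (∑ i : Fin N, ∑ j : Fin N, ∑ j' : Fin N,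
        if i ≠ j ∧ i ≠ j' ∧ j ≠ j' then
          ‖ρ (basisCfg hd {i, j}) (basisCfg hd {i, j'})‖ -
            Real.sqrt ((swapQuad ρ j (basisCfg hd {i, j}) (basisCfg hd {i, j'})).re)
        else 0)
        ≤ ∑ i : Fin N, ∑ j : Fin N, ∑ j' : Fin N, ∑ s : Fin n, p s * q s i j j' :=
          Finset.sum_le_sum fun i _ => Finset.sum_le_sum fun j _ =>
            Finset.sum_le_sum fun j' _ => htri i j j'
      _ = ∑ s : Fin n, ∑ i : Fin N, ∑ j : Fin N, ∑ j' : Fin N, p s * q s i j j' :=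
          hinterch _
      _ = ∑ s : Fin n, p s * ∑ i : Fin N, ∑ j : Fin N, ∑ j' : Fin N, q s i j j' :=
          Finset.sum_congr rfl fun s _ => hfact s
  -- diagonal sum
  set Dsum : Fin n → ℝ := fun s => ∑ i : Fin N, ∑ j : Fin N,
    if i ≠ j then Complex.normSq (ψ s (basisCfg hd {i, j})) else 0 with hDsum
  have hDsumnn : ∀ s, 0 ≤ Dsum s := by
    intro s
    refine Finset.sum_nonneg fun i _ => Finset.sum_nonneg fun j _ => ?_
    by_cases hij : i ≠ j <;> simp [hij, Complex.normSq_nonneg]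
  have hdsum : (∑ i : Fin N, ∑ j : Fin N,
      if i ≠ j then (ρ (basisCfg hd {i, j}) (basisCfg hd {i, j})).re else 0)
      = ∑ s : Fin n, p s * Dsum s := by
    calc (∑ i : Fin N, ∑ j : Fin N,
        if i ≠ j then (ρ (basisCfg hd {i, j}) (basisCfg hd {i, j})).re else 0)
        = ∑ i : Fin N, ∑ j : Fin N, ∑ s : Fin n,
            (if i ≠ j then p s * Complex.normSq (ψ s (basisCfg hd {i, j})) else 0) := by
          refine Finset.sum_congr rfl fun i _ => Finset.sum_congr rfl fun j _ => ?_
          by_cases hij : i ≠ j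
          · rw [if_pos hij, hdiag, Complex.ofReal_re]
            exact Finset.sum_congr rfl fun s _ => (if_pos hij).symm
          · rw [if_neg hij]
            exact (Finset.sum_eq_zero fun s _ => if_neg hij).symm
      _ = ∑ s : Fin n, ∑ i : Fin N, ∑ j : Fin N,
            (if i ≠ j then p s * Complex.normSq (ψ s (basisCfg hd {i, j})) else 0) := by
          calc _ = ∑ i : Fin N, ∑ s : Fin n, ∑ j : Fin N,
              (if i ≠ j then p s * Complex.normSq (ψ s (basisCfg hd {i, j})) else 0) :=
                Finset.sum_congr rfl fun i _ => Finset.sum_comm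
            _ = _ := Finset.sum_comm
      _ = ∑ s : Fin n, p s * Dsum s := by
          refine Finset.sum_congr rfl fun s _ => ?_
          rw [hDsum, Finset.mul_sum]
          refine Finset.sum_congr rfl fun i _ => ?_
          rw [Finset.mul_sum]
          refine Finset.sum_congr rfl fun j _ => ?_
          by_cases hij : i ≠ j <;> simp [hij]
  -- conclude
  have hNk : ((N - k : ℕ) : ℝ) ≤ ((max (2 * (N - k - 1)) (N - k) : ℕ) : ℝ) :=
    Nat.cast_le.2 (le_max_right _ _)
  have hfinal : (∑ i : Fin N, ∑ j : Fin N, ∑ j' : Fin N,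
      if i ≠ j ∧ i ≠ j' ∧ j ≠ j' then
        ‖ρ (basisCfg hd {i, j}) (basisCfg hd {i, j'})‖ -
          Real.sqrt ((swapQuad ρ j (basisCfg hd {i, j}) (basisCfg hd {i, j'})).re)
      else 0)
      ≤ ((max (2 * (N - k - 1)) (N - k) : ℕ) : ℝ) *
        ∑ i : Fin N, ∑ j : Fin N,
          (if i ≠ j then (ρ (basisCfg hd {i, j}) (basisCfg hd {i, j})).re else 0) := by
    rw [hdsum]
    refine le_trans hmain1 ?_
    rw [Finset.mul_sum]
    refine Finset.sum_le_sum fun s _ => ?_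
    have hpure := SepAux.pure_bound hd hk1 (ψ s) (hsepp s)
    have hb : (∑ i : Fin N, ∑ j : Fin N, ∑ j' : Fin N, q s i j j')
        ≤ ((max (2 * (N - k - 1)) (N - k) : ℕ) : ℝ) * Dsum s := by
      refine le_trans ?_ (mul_le_mul_of_nonneg_right hNk (hDsumnn s))
      exact hpure
    calc p s * ∑ i : Fin N, ∑ j : Fin N, ∑ j' : Fin N, q s i j j'
        ≤ p s * (((max (2 * (N - k - 1)) (N - k) : ℕ) : ℝ) * Dsum s) :=
          mul_le_mul_of_nonneg_left hb (hp s)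
      _ = ((max (2 * (N - k - 1)) (N - k) : ℕ) : ℝ) * (p s * Dsum s) := by ring
  linarith
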